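/- For p ≥ 2 and real numbers a, b: |a + b|^p ≤ |a|^p + p|a|^{p−2}a b + (1/2)p(p−1)(|a| + |b|)^{p−2} b². Consequently the second-order Taylor remainder of x ↦ |x|^p is controlled as needed in the Itô formula for the p-th power of the L_p norm. -/

import Mathlib

lemma psi_hasDerivAt (q : ℝ) (hq : 0 ≤ q) (x : ℝ) :
    HasDerivAt (fun y : ℝ => |y| ^ q * y) ((q + 1) * |x| ^ q) x := by
  rcases eq_or_lt_of_le hq with hq0 | hq0
  · subst hq0
    simpa [Real.rpow_zero] using (hasDerivAt_id' x)
  rcases lt_trichotomy x 0 with hx | hx | hx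
  · -- x < 0 : near x, |y| = -y
    have hev : (fun y : ℝ => |y| ^ q * y) =ᶠ[nhds x] (fun y : ℝ => (-y) ^ q * y) := by
      filter_upwards [eventually_lt_nhds hx] with y hy
      rw [abs_of_neg hy]
    have h1 : HasDerivAt (fun y : ℝ => (-y) ^ q) (q * (-x) ^ (q - 1) * (-1)) x := by
      have := (Real.hasDerivAt_rpow_const (x := -x) (p := q)
        (Or.inl (by linarith))).comp x (hasDerivAt_neg x)
      simpa [mul_comm, Function.comp_def] using this
    have h2 := h1.mul (hasDerivAt_id x)
    simp only [id] at h2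
    have h3 : q * (-x) ^ (q - 1) * (-1) * x + (-x) ^ q * 1 = (q + 1) * |x| ^ q := by
      rw [abs_of_neg hx]
      have : (-x) ^ (q - 1) * (-x) = (-x) ^ q := by
        rw [← Real.rpow_add_one (by linarith) (q - 1)]; ring_nf
      nlinarith [this]
    rw [h3] at h2
    exact h2.congr_of_eventuallyEq hev
  · -- x = 0
    subst hx
    have hz : ((q : ℝ) + 1) * |(0 : ℝ)| ^ q = 0 := by
      rw [abs_zero, Real.zero_rpow (ne_of_gt hq0)]; ring
    rw [hz, hasDerivAt_iff_tendsto_slope]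
    have hcont : Filter.Tendsto (fun y : ℝ => |y| ^ q) (nhds 0) (nhds 0) := by
      have h0 : ContinuousAt (fun x : ℝ => x ^ q) (|(0 : ℝ)|) := by
        rw [abs_zero]; exact Real.continuousAt_rpow_const 0 q (Or.inr hq)
      have h := h0.comp (continuous_abs.continuousAt : ContinuousAt (fun y : ℝ => |y|) 0)
      simpa [Function.comp_def, Real.zero_rpow (ne_of_gt hq0)] using h.tendsto
    refine (hcont.mono_left nhdsWithin_le_nhds).congr' ?_
    filter_upwards [self_mem_nhdsWithin] with y hy
    have hy0 : y ≠ 0 := hy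
    rw [slope_def_field]; simp [hy0]
  · -- 0 < x
    have hev : (fun y : ℝ => |y| ^ q * y) =ᶠ[nhds x] (fun y : ℝ => y ^ (q + 1)) := by
      filter_upwards [eventually_gt_nhds hx] with y hy
      rw [abs_of_pos hy, Real.rpow_add_one (ne_of_gt hy)]
    have h1 : HasDerivAt (fun y : ℝ => y ^ (q + 1)) ((q + 1) * x ^ (q + 1 - 1)) x :=
      Real.hasDerivAt_rpow_const (Or.inl (ne_of_gt hx))
    have h3 : (q + 1) * x ^ (q + 1 - 1) = (q + 1) * |x| ^ q := by
      rw [abs_of_pos hx]; ring_nf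
    rw [h3] at h1
    exact h1.congr_of_eventuallyEq hev

/-- Second-order Taylor estimate for `x ↦ |x|^p`, `p ≥ 2`:
`|a+b|^p ≤ |a|^p + p|a|^{p−2}ab + (1/2)p(p−1)(|a|+|b|)^{p−2}b²`. -/
theorem stmt16 (p a b : ℝ) (hp : 2 ≤ p) :
    |a + b| ^ p ≤
      |a| ^ p + p * |a| ^ (p - 2) * a * b +
        (1 / 2) * p * (p - 1) * (|a| + |b|) ^ (p - 2) * b ^ 2 := by
  set q := p - 2 with hqdef
  have hq : (0 : ℝ) ≤ q := by simp [hqdef]; linarith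
  set M := |a| + |b| with hMdef
  have hMnn : 0 ≤ M := by positivity
  set g : ℝ → ℝ := fun t =>
    |a| ^ p + p * |a| ^ q * a * (t * b) + (1 / 2) * p * (p - 1) * M ^ q * (t * b) ^ 2
      - |a + t * b| ^ p with hgdef
  -- derivative of g
  have hg : ∀ t : ℝ, HasDerivAt g
      (p * |a| ^ q * a * b + p * (p - 1) * M ^ q * (t * b ^ 2)
        - p * |a + t * b| ^ q * (a + t * b) * b) t := by
    intro t
    have h1 : HasDerivAt (fun t : ℝ => p * |a| ^ q * a * (t * b))
        (p * |a| ^ q * a * b) t := by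
      simpa using ((hasDerivAt_id t).mul_const b).const_mul (p * |a| ^ q * a)
    have h2 : HasDerivAt (fun t : ℝ => (1 / 2) * p * (p - 1) * M ^ q * (t * b) ^ 2)
        (p * (p - 1) * M ^ q * (t * b ^ 2)) t := by
      have := (((hasDerivAt_id t).mul_const b).pow 2).const_mul ((1 / 2) * p * (p - 1) * M ^ q)
      refine this.congr_deriv ?_
      simp; ring
    have h3 : HasDerivAt (fun t : ℝ => |a + t * b| ^ p)
        (p * |a + t * b| ^ q * (a + t * b) * b) t := by
      have hin : HasDerivAt (fun t : ℝ => a + t * b) b t := by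
        simpa using ((hasDerivAt_id t).mul_const b).const_add a
      have := (hasDerivAt_abs_rpow (a + t * b) (by linarith : (1:ℝ) < p)).comp t hin
      simpa [mul_comm, mul_assoc, mul_left_comm, Function.comp_def, ← hqdef] using this
    have := ((hasDerivAt_const t (|a| ^ p)).add h1).add h2 |>.sub h3
    refine this.congr_deriv ?_
    ring
  -- Lipschitz bound for ψ(x) = |x|^q * x on [-M, M]
  have hlip : ∀ x y : ℝ, x ∈ Set.Icc (-M) M → y ∈ Set.Icc (-M) M →
      |(|y| ^ q * y) - (|x| ^ q * x)| ≤ ((q + 1) * M ^ q) * |y - x| := by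
    intro x y hx hy
    have key := Convex.norm_image_sub_le_of_norm_hasDerivWithin_le
      (f := fun z : ℝ => |z| ^ q * z) (f' := fun z : ℝ => (q + 1) * |z| ^ q)
      (s := Set.Icc (-M) M) (C := (q + 1) * M ^ q)
      (fun z _ => (psi_hasDerivAt q hq z).hasDerivWithinAt)
      (fun z hz => by
        have hzM : |z| ≤ M := abs_le.mpr ⟨hz.1, hz.2⟩
        have h1 : |z| ^ q ≤ M ^ q := Real.rpow_le_rpow (abs_nonneg z) hzM hq
        have h2 : (0 : ℝ) ≤ |z| ^ q := Real.rpow_nonneg (abs_nonneg z) q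
        show ‖(q + 1) * |z| ^ q‖ ≤ (q + 1) * M ^ q
        rw [Real.norm_eq_abs, abs_of_nonneg (by positivity)]
        nlinarith)
      (convex_Icc _ _) hx hy
    simpa [Real.norm_eq_abs] using key
  -- deriv g ≥ 0 on (0,1)
  have hderiv_nonneg : ∀ t ∈ interior (Set.Icc (0:ℝ) 1), 0 ≤ deriv g t := by
    intro t ht
    rw [interior_Icc] at ht
    rw [(hg t).deriv]
    have hamem : a ∈ Set.Icc (-M) M := by
      constructor <;> [nlinarith [abs_nonneg b, neg_abs_le a, le_abs_self a];
        nlinarith [abs_nonneg b, le_abs_self a]]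
    have habmem : a + t * b ∈ Set.Icc (-M) M := by
      have h1 : |a + t * b| ≤ |a| + |t * b| := abs_add_le _ _
      have h2 : |t * b| = t * |b| := by
        rw [abs_mul, abs_of_pos ht.1]
      have h3 : t * |b| ≤ |b| := by nlinarith [abs_nonneg b, ht.2]
      have : |a + t * b| ≤ M := by rw [hMdef]; linarith [h1, h2 ▸ h3]
      exact abs_le.mp this
    have key := hlip a (a + t * b) hamem habmem
    have hsimp : |(a + t * b) - a| = t * |b| := by
      rw [show a + t * b - a = t * b by ring, abs_mul, abs_of_pos ht.1]
    rw [hsimp] at key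
    have hq1 : q + 1 = p - 1 := by rw [hqdef]; ring
    rw [hq1] at key
    set ψa := |a| ^ q * a
    set ψt := |a + t * b| ^ q * (a + t * b) with hψt
    have hexpand : p * |a| ^ q * a * b + p * (p - 1) * M ^ q * (t * b ^ 2)
        - p * |a + t * b| ^ q * (a + t * b) * b
        = p * (b * (ψa - ψt)) + p * (p - 1) * M ^ q * t * b ^ 2 := by
      simp only [ψa, hψt]; ring
    rw [hexpand]
    have habs : b * (ψa - ψt) ≥ -(|b| * |ψt - ψa|) := by
      have h1 : b * (ψa - ψt) ≥ -|b * (ψa - ψt)| := neg_abs_le _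
      rw [abs_mul, abs_sub_comm] at h1
      linarith
    have hMq : (0:ℝ) ≤ M ^ q := Real.rpow_nonneg hMnn q
    have hpp : (0:ℝ) < p := by linarith
    have h4 : |b| * |ψt - ψa| ≤ |b| * ((p - 1) * M ^ q * (t * |b|)) :=
      mul_le_mul_of_nonneg_left key (abs_nonneg b)
    have h5 : |b| * ((p - 1) * M ^ q * (t * |b|)) = (p - 1) * M ^ q * (t * b ^ 2) := by
      rw [show |b| * ((p - 1) * M ^ q * (t * |b|))
        = (p - 1) * M ^ q * (t * (|b| * |b|)) by ring, abs_mul_abs_self, ← sq]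
    rw [h5] at h4
    have h6 : -((p - 1) * M ^ q * (t * b ^ 2)) ≤ b * (ψa - ψt) := by linarith
    nlinarith [mul_le_mul_of_nonneg_left h6 hpp.le]
  -- monotone on [0,1]
  have hcont : ContinuousOn g (Set.Icc 0 1) :=
    fun t _ => ((hg t).continuousAt).continuousWithinAt
  have hdiff : DifferentiableOn ℝ g (interior (Set.Icc (0:ℝ) 1)) :=
    fun t _ => (hg t).differentiableAt.differentiableWithinAt
  have hmono := monotoneOn_of_deriv_nonneg (convex_Icc 0 1) hcont hdiff hderiv_nonneg
  have h01 := hmono (Set.mem_Icc.mpr ⟨le_refl 0, zero_le_one⟩)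
    (Set.mem_Icc.mpr ⟨zero_le_one, le_refl 1⟩) zero_le_one
  have hg0 : g 0 = 0 := by simp [hgdef]
  have hg1 : g 1 = |a| ^ p + p * |a| ^ q * a * b
      + (1 / 2) * p * (p - 1) * M ^ q * b ^ 2 - |a + b| ^ p := by
    simp [hgdef]
  rw [hg0, hg1] at h01
  linarith
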